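/- Over the real field ℝ, the 4-dimensional Jordan algebras with a² = d, b² = d, c² = d and with a² = d, b² = d, c² = −d (all other basis products zero) are not isomorphic. -/

import Mathlib

/-- A map `f : M → M → N` is `K`-bilinear. -/
def IsBilin (K : Type*) [Field K] {M N : Type*} [AddCommGroup M] [Module K M]
    [AddCommGroup N] [Module K N] (f : M → M → N) : Prop :=
  (∀ x x' y, f (x + x') y = f x y + f x' y) ∧
  (∀ x y y', f x (y + y') = f x y + f x y') ∧
  (∀ (a : K) (x y), f (a • x) y = a • f x y) ∧
  (∀ (a : K) (x y), f x (a • y) = a • f x y)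

/-- `mul` makes `M` into a Jordan algebra over `K`: a commutative bilinear product
satisfying the Jordan identity `x² ∘ (x ∘ y) = x ∘ (x² ∘ y)`. -/
def IsJordanAlg (K : Type*) [Field K] {M : Type*} [AddCommGroup M] [Module K M]
    (mul : M → M → M) : Prop :=
  IsBilin K mul ∧ (∀ x y, mul x y = mul y x) ∧
  ∀ x y, mul (mul x x) (mul x y) = mul x (mul (mul x x) y)

/-- A Jordan 2-cocycle from `(M, mul)` to `V`. -/
def IsJCocycle (K : Type*) [Field K] {M V : Type*} [AddCommGroup M] [Module K M]
    [AddCommGroup V] [Module K V] (mul : M → M → M) (θ : M → M → V) : Prop :=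
  IsBilin K θ ∧ (∀ x y, θ x y = θ y x) ∧
  ∀ x y, θ (mul x x) (mul x y) = θ x (mul (mul x x) y)

/-- Lower central series: `lcs K mul 0 = c¹(J) = J`, `lcs K mul (n+1) = c^{n+2}(J) = c^{n+1}(J) ∘ J`. -/
def lcs (K : Type*) [Field K] {M : Type*} [AddCommGroup M] [Module K M]
    (mul : M → M → M) : ℕ → Submodule K M
  | 0 => ⊤
  | n + 1 => Submodule.span K {z | ∃ x, x ∈ lcs K mul n ∧ ∃ y, z = mul x y}

/-- A Jordan algebra is nilpotent if its lower central series reaches zero. -/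
def IsNilpotentAlg (K : Type*) [Field K] {M : Type*} [AddCommGroup M] [Module K M]
    (mul : M → M → M) : Prop :=
  ∃ n, lcs K mul n = ⊥

/-- Isomorphism of (Jordan) algebras. -/
def JIso (K : Type*) [Field K] {M N : Type*} [AddCommGroup M] [Module K M]
    [AddCommGroup N] [Module K N] (mul1 : M → M → M) (mul2 : N → N → N) : Prop :=
  ∃ e : M ≃ₗ[K] N, ∀ x y, e (mul1 x y) = mul2 (e x) (e y)

/-- Central extension product on `M × V` induced by `θ`. -/
def extMul (K : Type*) [Field K] {M V : Type*} [AddCommGroup M] [Module K M]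
    [AddCommGroup V] [Module K V] (mul : M → M → M) (θ : M → M → V) :
    M × V → M × V → M × V :=
  fun p q => (mul p.1 q.1, θ p.1 q.1)

/-- 4-dim real algebra: `a² = d`, `b² = d`, `c² = d`. -/
def m4P : (Fin 4 → ℝ) → (Fin 4 → ℝ) → (Fin 4 → ℝ) :=
  fun x y => ![0, 0, 0, x 0 * y 0 + x 1 * y 1 + x 2 * y 2]

/-- 4-dim real algebra: `a² = d`, `b² = d`, `c² = -d`. -/
def m4N : (Fin 4 → ℝ) → (Fin 4 → ℝ) → (Fin 4 → ℝ) :=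
  fun x y => ![0, 0, 0, x 0 * y 0 + x 1 * y 1 - x 2 * y 2]


private lemma keylemma18 (a0 a1 a2 b0 b1 b2 c0 c1 c2 L : ℝ) (hL : L ≠ 0)
    (h00 : a0*a0 + a1*a1 - a2*a2 = L)
    (h11 : b0*b0 + b1*b1 - b2*b2 = L)
    (h22 : c0*c0 + c1*c1 - c2*c2 = L)
    (h01 : a0*b0 + a1*b1 - a2*b2 = 0)
    (h02 : a0*c0 + a1*c1 - a2*c2 = 0)
    (h12 : b0*c0 + b1*c1 - b2*c2 = 0) : False := by
  rcases hL.lt_or_gt with h | h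
  · have h01' : a0*b0 + a1*b1 = a2*b2 := by linarith
    have q1 : L + a2^2 = a0^2 + a1^2 := by linear_combination -h00
    have q2 : L + b2^2 = b0^2 + b1^2 := by linear_combination -h11
    have e1 : 0 ≤ L + a2^2 := by rw [q1]; positivity
    have e2 : 0 ≤ L + b2^2 := by rw [q2]; positivity
    have e3 : (a2*b2)^2 ≤ (L + a2^2) * (L + b2^2) := by
      rw [q1, q2, ← h01']; nlinarith [sq_nonneg (a0*b1 - a1*b0)]
    nlinarith [e1, e2, e3, sq_nonneg a2, sq_nonneg b2]
  · have key : L^3 = -(a0*(b1*c2 - b2*c1) - a1*(b0*c2 - b2*c0) + a2*(b0*c1 - b1*c0))^2 := by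
      linear_combination
        (-(((b0*b0+b1*b1-b2*b2)*(c0*c0+c1*c1-c2*c2) - (b0*c0+b1*c1-b2*c2)^2)) * h00
          + ((a0*b0+a1*b1-a2*b2)*(c0*c0+c1*c1-c2*c2) - (b0*c0+b1*c1-b2*c2)*(a0*c0+a1*c1-a2*c2)) * h01
          - ((a0*b0+a1*b1-a2*b2)*(b0*c0+b1*c1-b2*c2) - (b0*b0+b1*b1-b2*b2)*(a0*c0+a1*c1-a2*c2)) * h02
          - (L*(c0*c0+c1*c1-c2*c2)) * h11
          + L*(b0*c0+b1*c1-b2*c2)*h12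
          - L^2*h22)
    nlinarith [pow_pos h 3, key,
      sq_nonneg (a0*(b1*c2 - b2*c1) - a1*(b0*c2 - b2*c0) + a2*(b0*c1 - b1*c0))]

/-- over ℝ the Jordan algebras with `a²=b²=c²=d` and with
`a²=b²=d, c²=-d` are not isomorphic. -/
theorem stmt18 :
    IsJordanAlg ℝ m4P ∧ IsJordanAlg ℝ m4N ∧ ¬ JIso ℝ m4P m4N := by
  have jordanP : IsJordanAlg ℝ m4P := by
    refine ⟨⟨?_, ?_, ?_, ?_⟩, ?_, ?_⟩ <;>
      intros <;> funext j <;> fin_cases j <;>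
      simp [m4P, Pi.add_apply, Pi.smul_apply, smul_eq_mul] <;> ring
  have jordanN : IsJordanAlg ℝ m4N := by
    refine ⟨⟨?_, ?_, ?_, ?_⟩, ?_, ?_⟩ <;>
      intros <;> funext j <;> fin_cases j <;>
      simp [m4N, Pi.add_apply, Pi.smul_apply, smul_eq_mul] <;> ring
  refine ⟨jordanP, jordanN, ?_⟩
  rintro ⟨e, he⟩
  set E0 : Fin 4 → ℝ := ![1,0,0,0] with hE0def
  set E1 : Fin 4 → ℝ := ![0,1,0,0] with hE1def
  set E2 : Fin 4 → ℝ := ![0,0,1,0] with hE2def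
  set D : Fin 4 → ℝ := ![0,0,0,1] with hDdef
  have m00 : m4P E0 E0 = D := by funext j; fin_cases j <;> norm_num [m4P, hE0def, hDdef, Matrix.cons_val_two, Matrix.vecHead, Matrix.vecTail]
  have m11 : m4P E1 E1 = D := by funext j; fin_cases j <;> norm_num [m4P, hE1def, hDdef, Matrix.cons_val_two, Matrix.vecHead, Matrix.vecTail]
  have m22 : m4P E2 E2 = D := by funext j; fin_cases j <;> norm_num [m4P, hE2def, hDdef, Matrix.cons_val_two, Matrix.vecHead, Matrix.vecTail]
  have m01 : m4P E0 E1 = 0 := by funext j; fin_cases j <;> norm_num [m4P, hE0def, hE1def, Matrix.cons_val_two, Matrix.vecHead, Matrix.vecTail]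
  have m02 : m4P E0 E2 = 0 := by funext j; fin_cases j <;> norm_num [m4P, hE0def, hE2def, Matrix.cons_val_two, Matrix.vecHead, Matrix.vecTail]
  have m12 : m4P E1 E2 = 0 := by funext j; fin_cases j <;> norm_num [m4P, hE1def, hE2def, Matrix.cons_val_two, Matrix.vecHead, Matrix.vecTail]
  have he00 := he E0 E0; rw [m00] at he00
  have he11 := he E1 E1; rw [m11] at he11
  have he22 := he E2 E2; rw [m22] at he22
  have he01 := he E0 E1; rw [m01, map_zero] at he01
  have he02 := he E0 E2; rw [m02, map_zero] at he02
  have he12 := he E1 E2; rw [m12, map_zero] at he12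
  have h00 : e E0 0 * e E0 0 + e E0 1 * e E0 1 - e E0 2 * e E0 2 = e D 3 := by
    have := congrFun he00 3; simp [m4N] at this; linarith
  have h11 : e E1 0 * e E1 0 + e E1 1 * e E1 1 - e E1 2 * e E1 2 = e D 3 := by
    have := congrFun he11 3; simp [m4N] at this; linarith
  have h22 : e E2 0 * e E2 0 + e E2 1 * e E2 1 - e E2 2 * e E2 2 = e D 3 := by
    have := congrFun he22 3; simp [m4N] at this; linarith
  have h01 : e E0 0 * e E1 0 + e E0 1 * e E1 1 - e E0 2 * e E1 2 = 0 := by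
    have := congrFun he01.symm 3; simp [m4N] at this; linarith
  have h02 : e E0 0 * e E2 0 + e E0 1 * e E2 1 - e E0 2 * e E2 2 = 0 := by
    have := congrFun he02.symm 3; simp [m4N] at this; linarith
  have h12 : e E1 0 * e E2 0 + e E1 1 * e E2 1 - e E1 2 * e E2 2 = 0 := by
    have := congrFun he12.symm 3; simp [m4N] at this; linarith
  have hL : e D 3 ≠ 0 := by
    intro hz
    have hD0 : e D = 0 := by
      funext j
      have h0 := congrFun he00 0
      have h1 := congrFun he00 1
      have h2 := congrFun he00 2
      simp [m4N] at h0 h1 h2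
      fin_cases j <;> simp [h0, h1, h2, hz]
    have : D = 0 := by
      apply e.injective; rw [hD0, map_zero]
    have := congrFun this 3
    norm_num [hDdef, Matrix.cons_val_three, Matrix.cons_val_two, Matrix.vecHead, Matrix.vecTail] at this
  exact keylemma18 (e E0 0) (e E0 1) (e E0 2) (e E1 0) (e E1 1) (e E1 2)
    (e E2 0) (e E2 1) (e E2 2) (e D 3) hL h00 h11 h22 h01 h02 h12
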